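/- Let G be a non-complete graph with exactly two moplexes U and W, and let x, y be non-adjacent vertices. Then either U lies in the same component of G−S as x for every minimal x,y-separator S, or U lies in the same component of G−S as y for every minimal x,y-separator S. -/

import Mathlib

open SimpleGraph

namespace MoplexPaper

variable {V : Type*}

/-- Reachability in `G - S`: a walk from `u` to `v` all of whose vertices avoid `S`. -/
def ReachOutside (G : SimpleGraph V) (S : Set V) (u v : V) : Prop :=
  ∃ p : G.Walk u v, ∀ x ∈ p.support, x ∉ S

/-- `S` is a `u,v`-separator. -/
def IsSeparator (G : SimpleGraph V) (u v : V) (S : Set V) : Prop :=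
  ¬ G.Adj u v ∧ u ∉ S ∧ v ∉ S ∧ ¬ ReachOutside G S u v

/-- `S` is a minimal `u,v`-separator. -/
def IsMinSeparator (G : SimpleGraph V) (u v : V) (S : Set V) : Prop :=
  IsSeparator G u v S ∧ ∀ T ⊂ S, ¬ IsSeparator G u v T

/-- `S` is a minimal separator of `G`. -/
def IsMinimalSeparator (G : SimpleGraph V) (S : Set V) : Prop :=
  ∃ u v, u ≠ v ∧ IsMinSeparator G u v S

/-- The (open) neighbourhood of a set of vertices. -/
def setNbhd (G : SimpleGraph V) (X : Set V) : Set V :=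
  {v | v ∉ X ∧ ∃ x ∈ X, G.Adj v x}

/-- The closed neighbourhood of a vertex. -/
def closedNbhd (G : SimpleGraph V) (v : V) : Set V :=
  insert v (G.neighborSet v)

/-- `M` is a module of `G`. -/
def IsModule (G : SimpleGraph V) (M : Set V) : Prop :=
  ∀ v ∉ M, (∀ x ∈ M, G.Adj v x) ∨ (∀ x ∈ M, ¬ G.Adj v x)

/-- `M` is a clique module of `G`. -/
def IsCliqueModule (G : SimpleGraph V) (M : Set V) : Prop :=
  G.IsClique M ∧ IsModule G M

/-- `X` is a moplex of `G`: an inclusion-maximal clique module whose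
neighbourhood is empty or a minimal separator. -/
def IsMoplex (G : SimpleGraph V) (X : Set V) : Prop :=
  X.Nonempty ∧ IsCliqueModule G X ∧
  (∀ Y, X ⊆ Y → IsCliqueModule G Y → Y = X) ∧
  (setNbhd G X = ∅ ∨ IsMinimalSeparator G (setNbhd G X))

/-- A vertex is moplicial if it belongs to a moplex. -/
def Moplicial (G : SimpleGraph V) (v : V) : Prop := ∃ X, IsMoplex G X ∧ v ∈ X

/-- An extension of `v`: an induced `P₃` with midpoint `v`. -/
def IsExtension (G : SimpleGraph V) (v a b : V) : Prop :=
  a ≠ b ∧ G.Adj v a ∧ G.Adj v b ∧ ¬ G.Adj a b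

/-- A cycle is induced if the only edges of `G` among its vertices are its own edges. -/
def IsInducedCycle (G : SimpleGraph V) {w : V} (c : G.Walk w w) : Prop :=
  c.IsCycle ∧ ∀ x ∈ c.support, ∀ y ∈ c.support, G.Adj x y → s(x, y) ∈ c.edges

/-- `v` is avoidable: every extension of `v` is contained in an induced cycle. -/
def Avoidable (G : SimpleGraph V) (v : V) : Prop :=
  ∀ a b, IsExtension G v a b →
    ∃ (w : V) (c : G.Walk w w), IsInducedCycle G c ∧
      a ∈ c.support ∧ v ∈ c.support ∧ b ∈ c.support

/-- `A` is an asteroidal set of `G`. -/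
def IsAsteroidal (G : SimpleGraph V) (A : Set V) : Prop :=
  ∀ a ∈ A, ∀ x ∈ A, ∀ y ∈ A, x ≠ a → y ≠ a →
    ReachOutside G (closedNbhd G a) x y

/-- `G` is AT-free: it has no asteroidal triple. -/
def ATFree (G : SimpleGraph V) : Prop :=
  ¬ ∃ A : Set V, IsAsteroidal G A ∧ A.ncard = 3

/-- `G` has exactly the two moplexes `U` and `W`. -/
def HasExactlyTwoMoplexes (G : SimpleGraph V) (U W : Set V) : Prop :=
  IsMoplex G U ∧ IsMoplex G W ∧ U ≠ W ∧ ∀ X, IsMoplex G X → X = U ∨ X = W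

/-- `G` is not complete. -/
def NonComplete (G : SimpleGraph V) : Prop :=
  ∃ x y : V, x ≠ y ∧ ¬ G.Adj x y

section basics
variable {G : SimpleGraph V} {S T : Set V} {u v w : V}

lemma reach_refl (h : v ∉ S) : ReachOutside G S v v :=
  ⟨Walk.nil, by simp [h]⟩

lemma reach_symm (h : ReachOutside G S u v) : ReachOutside G S v u := by
  obtain ⟨p, hp⟩ := h
  exact ⟨p.reverse, by intro z hz; exact hp z (by simpa [Walk.support_reverse] using hz)⟩

lemma reach_trans (h : ReachOutside G S u v) (h' : ReachOutside G S v w) :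
    ReachOutside G S u w := by
  obtain ⟨p, hp⟩ := h
  obtain ⟨q, hq⟩ := h'
  refine ⟨p.append q, ?_⟩
  intro z hz
  rcases (Walk.mem_support_append_iff _ _).mp hz with h | h
  · exact hp z h
  · exact hq z h

lemma reach_adj (h : G.Adj u v) (hu : u ∉ S) (hv : v ∉ S) : ReachOutside G S u v :=
  ⟨Walk.cons h Walk.nil, by
    intro z hz
    simp only [Walk.support_cons, Walk.support_nil, List.mem_cons, List.mem_singleton] at hz
    rcases hz with rfl | hz
    · exact hu
    · simp at hz; subst hz; exact hv⟩

lemma reach_left_not (h : ReachOutside G S u v) : u ∉ S := by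
  obtain ⟨p, hp⟩ := h; exact hp u p.start_mem_support

lemma reach_right_not (h : ReachOutside G S u v) : v ∉ S := by
  obtain ⟨p, hp⟩ := h; exact hp v p.end_mem_support

lemma reach_step (h : ReachOutside G S u v) (ha : G.Adj w u) (hw : w ∉ S) :
    ReachOutside G S w v :=
  reach_trans (reach_adj ha hw (reach_left_not h)) h

/-- If every vertex reaching `v'` outside `S` is outside `T`, then reachability
outside `S` towards `v'` upgrades to reachability outside `T`. -/
lemma reach_avoid (hT : ∀ z, ReachOutside G S z v → z ∉ T)
    (h : ReachOutside G S u v) : ReachOutside G T u v := by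
  have aux : ∀ {a b : V} (p : G.Walk a b), (∀ z, ReachOutside G S z b → z ∉ T) →
      (∀ z ∈ p.support, z ∉ S) → ReachOutside G T a b := by
    intro a b p
    induction p with
    | nil =>
      intro hT' hp
      exact reach_refl (hT' _ (reach_refl (hp _ (Walk.start_mem_support _))))
    | cons hadj q ih =>
      intro hT' hp
      have hq : ∀ z ∈ q.support, z ∉ S := by
        intro z hz; exact hp z (by simp [Walk.support_cons, hz])
      have haT : _ ∉ T := hT' _ ⟨Walk.cons hadj q, hp⟩
      have hbT : _ ∉ T := hT' _ ⟨q, hq⟩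
      exact reach_trans (reach_adj hadj haT hbT) (ih hT' hq)
  obtain ⟨p, hp⟩ := h
  exact aux p hT hp

lemma sep_symm (h : IsSeparator G u v S) : IsSeparator G v u S :=
  ⟨fun ha => h.1 ha.symm, h.2.2.1, h.2.1, fun hr => h.2.2.2 (reach_symm hr)⟩

lemma minsep_symm (h : IsMinSeparator G u v S) : IsMinSeparator G v u S :=
  ⟨sep_symm h.1, fun T hT hsep => h.2 T hT (sep_symm hsep)⟩

end basics

section exist
variable [Fintype V] {G : SimpleGraph V} {x y : V}

/-- Any separator contains a minimal separator. -/
lemma exists_minsep_subset (hxy : ¬ G.Adj x y) :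
    ∀ (n : ℕ) (S₀ : Set V), S₀.ncard ≤ n → IsSeparator G x y S₀ →
      ∃ S, S ⊆ S₀ ∧ IsMinSeparator G x y S := by
  intro n
  induction n with
  | zero =>
    intro S₀ hcard hsep
    have h0 : S₀ = ∅ := (Set.ncard_eq_zero (Set.toFinite S₀)).mp (Nat.le_zero.mp hcard)
    refine ⟨S₀, subset_rfl, hsep, ?_⟩
    intro T hT
    rw [h0] at hT
    rw [Set.ssubset_def] at hT
    exact fun _ => hT.2 (Set.empty_subset T)
  | succ n ih =>
    intro S₀ hcard hsep
    by_cases hmin : ∀ T ⊂ S₀, ¬ IsSeparator G x y T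
    · exact ⟨S₀, subset_rfl, hsep, hmin⟩
    · push_neg at hmin
      obtain ⟨T, hTsub, hTsep⟩ := hmin
      have hTcard : T.ncard ≤ n := by
        have := Set.ncard_lt_ncard hTsub (Set.toFinite S₀)
        omega
      obtain ⟨S, hS1, hS2⟩ := ih T hTcard hTsep
      exact ⟨S, hS1.trans hTsub.subset, hS2⟩

lemma exists_minsep_of_sep {S₀ : Set V} (hsep : IsSeparator G x y S₀) :
    ∃ S, S ⊆ S₀ ∧ IsMinSeparator G x y S :=
  exists_minsep_subset hsep.1 S₀.ncard S₀ le_rfl hsep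

/-- Between any two distinct non-adjacent vertices there is a minimal separator. -/
lemma exists_minsep (hne : x ≠ y) (hxy : ¬ G.Adj x y) :
    ∃ S, IsMinSeparator G x y S := by
  have hsep : IsSeparator G x y {z | z ≠ x ∧ z ≠ y} := by
    refine ⟨hxy, by simp, by simp [hne.symm], ?_⟩
    rintro ⟨p, hp⟩
    have : ∀ z ∈ p.support, z = x ∨ z = y := by
      intro z hz
      have := hp z hz
      simp only [Set.mem_setOf_eq, not_and_or, not_not] at this
      tauto
    -- a walk from x to y supported in {x, y} forces adjacency or equality
    cases p with
    | nil => exact hne rfl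
    | cons hadj q =>
      rename_i c
      have hc : c = x ∨ c = y := this c (by simp [Walk.support_cons])
      rcases hc with rfl | rfl
      · exact G.loopless.irrefl _ hadj
      · exact hxy hadj
  obtain ⟨S, _, hS⟩ := exists_minsep_of_sep hsep
  exact ⟨S, hS⟩

/-- Every vertex of a minimal `x,y`-separator has a neighbour on the `x`-side. -/
lemma minsep_nbr_side {S : Set V} (hS : IsMinSeparator G x y S) {s : V} (hs : s ∈ S) :
    ∃ a, G.Adj s a ∧ ReachOutside G S a x := by
  have hT : ¬ IsSeparator G x y (S \ {s}) :=
    hS.2 _ ⟨Set.diff_subset, fun hsub => (hsub hs).2 rfl⟩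
  have hxS : x ∉ S := hS.1.2.1
  have hyS : y ∉ S := hS.1.2.2.1
  simp only [IsSeparator, not_and_or, not_not] at hT
  have hreach : ReachOutside G (S \ {s}) x y := by
    rcases hT with h | h | h | h
    · exact absurd h hS.1.1
    · exact absurd h (by simp [hxS])
    · exact absurd h (by simp [hyS])
    · exact h
  -- walk from x to y avoiding S \ {s}; follow it until it first hits s (it must,
  -- else it avoids S); the predecessor is the required neighbour.
  have aux : ∀ {a b : V} (p : G.Walk a b), (∀ z ∈ p.support, z ∉ S \ {s}) →
      ReachOutside G S x a →
      (∃ c, G.Adj s c ∧ ReachOutside G S c x) ∨ ReachOutside G S x b := by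
    intro a b p
    induction p with
    | nil => intro _ hxa; exact Or.inr hxa
    | @cons a c b' hadj q ih =>
      intro hp hxa
      have hq : ∀ z ∈ q.support, z ∉ S \ {s} := by
        intro z hz; exact hp z (by simp [Walk.support_cons, hz])
      by_cases hcs : c = s
      · subst hcs
        exact Or.inl ⟨a, hadj.symm, reach_symm hxa⟩
      · have hcS : c ∉ S := by
          have := hp c (by simp [Walk.support_cons])
          simp only [Set.mem_diff, Set.mem_singleton_iff, not_and_or, not_not] at this
          tauto
        exact ih hq (reach_trans hxa (reach_adj hadj (reach_right_not hxa) hcS))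
  obtain ⟨p, hp⟩ := hreach
  rcases aux p hp (reach_refl hxS) with h | h
  · exact h
  · exact absurd h hS.1.2.2.2

end exist


section bb

/-- The side of `x` in `G - S`. -/
def sideSet (G : SimpleGraph V) (S : Set V) (x : V) : Set V :=
  {v | ReachOutside G S v x}

/-- The auxiliary graph: `G` restricted to `K` with `S` completed into a clique
(vertices outside `K` become isolated). -/
def auxH (G : SimpleGraph V) (K S : Set V) : SimpleGraph V where
  Adj u v := (G.Adj u v ∧ u ∈ K ∧ v ∈ K) ∨ (u ∈ S ∧ v ∈ S ∧ u ≠ v)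
  symm := by
    constructor
    rintro u v (⟨h, hu, hv⟩ | ⟨hu, hv, hne⟩)
    · exact Or.inl ⟨h.symm, hv, hu⟩
    · exact Or.inr ⟨hv, hu, hne.symm⟩
  loopless := by
    constructor
    rintro u (⟨h, _, _⟩ | ⟨_, _, hne⟩)
    · exact G.loopless.irrefl u h
    · exact hne rfl

variable [Fintype V] {G : SimpleGraph V} {x y : V} {S : Set V}

lemma side_step {c v : V} (hc : c ∈ sideSet G S x) (h : G.Adj c v) (hv : v ∉ S) :
    v ∈ sideSet G S x :=
  reach_step hc h.symm hv

lemma sides_disj (hS : IsMinSeparator G x y S) {v : V}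
    (hx : v ∈ sideSet G S x) (hy : v ∈ sideSet G S y) : False :=
  hS.1.2.2.2 (reach_trans (reach_symm hx) hy)

lemma side_nbr_K {c v : V} (hc : c ∈ sideSet G S x) (h : G.Adj c v) :
    v ∈ sideSet G S x ∪ S := by
  by_cases hv : v ∈ S
  · exact Or.inr hv
  · exact Or.inl (side_step hc h hv)

lemma auxH_adj_side {c : V} (hc : c ∈ sideSet G S x) (v : V) :
    (auxH G (sideSet G S x ∪ S) S).Adj c v ↔ G.Adj c v := by
  constructor
  · rintro (⟨h, _, _⟩ | ⟨hcS, _, _⟩)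
    · exact h
    · exact absurd hcS (reach_left_not hc)
  · intro h
    exact Or.inl ⟨h, Or.inl hc, side_nbr_K hc h⟩

/-- Convert a walk of the auxiliary graph avoiding `T'` into reachability
outside `T'` in `G`, rerouting the artificial `S`-edges through the `y`-side. -/
lemma conv_reach (hS : IsMinSeparator G x y S) {T' : Set V}
    (hT' : ∀ z, ReachOutside G S z y → z ∉ T') :
    ∀ {u v : V} (p : (auxH G (sideSet G S x ∪ S) S).Walk u v),
      (∀ z ∈ p.support, z ∉ T') → ReachOutside G T' u v := by
  intro u v p
  induction p with
  | nil => intro hp; exact reach_refl (hp _ (Walk.start_mem_support _))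
  | @cons a c b hadj q ih =>
    intro hp
    have hq : ∀ z ∈ q.support, z ∉ T' := fun z hz => hp z (by simp [Walk.support_cons, hz])
    have haT' : a ∉ T' := hp a (by simp [Walk.support_cons])
    have hcT' : c ∉ T' := hq c q.start_mem_support
    have hfirst : ReachOutside G T' a c := by
      rcases hadj with ⟨hG, _, _⟩ | ⟨haS, hcS, _⟩
      · exact reach_adj hG haT' hcT'
      · obtain ⟨b₁, hb₁, hb₁y⟩ := minsep_nbr_side (minsep_symm hS) haS
        obtain ⟨b₂, hb₂, hb₂y⟩ := minsep_nbr_side (minsep_symm hS) hcS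
        have r1 : ReachOutside G T' b₁ y := reach_avoid hT' hb₁y
        have r2 : ReachOutside G T' b₂ y := reach_avoid hT' hb₂y
        have hcy : ReachOutside G T' c y :=
          reach_trans (reach_adj hb₂ hcT' (hT' _ hb₂y)) r2
        exact reach_trans (reach_adj hb₁ haT' (hT' _ hb₁y)) (reach_trans r1 (reach_symm hcy))
    exact reach_trans hfirst (ih hq)

/-- A clique module meeting the `x`-side of a minimal separator is contained in it. -/
lemma clique_module_subset_side (hS : IsMinSeparator G x y S) {x₀ : V}
    (hx₀C : x₀ ∈ sideSet G S x) (Y : Set V) (hx₀Y : x₀ ∈ Y)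
    (hYclq : G.IsClique Y) (hYmod : IsModule G Y) : Y ⊆ sideSet G S x := by
  intro z hz
  by_cases hzx : z = x₀
  · exact hzx ▸ hx₀C
  have hzadj : G.Adj z x₀ := hYclq hz hx₀Y hzx
  by_cases hzS : z ∈ S
  · exfalso
    obtain ⟨b₀, hb₀adj, hb₀y⟩ := minsep_nbr_side (minsep_symm hS) hzS
    have hb₀C : b₀ ∈ sideSet G S x → False := fun hh => sides_disj hS hh hb₀y
    have hb₀Y : b₀ ∉ Y := by
      intro hmem
      have hne' : b₀ ≠ x₀ := fun e => hb₀C (e ▸ hx₀C)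
      exact hb₀C (side_step hx₀C (hYclq hmem hx₀Y hne').symm (reach_left_not hb₀y))
    rcases hYmod b₀ hb₀Y with hall | hnone
    · exact hb₀C (side_step hx₀C (hall x₀ hx₀Y).symm (reach_left_not hb₀y))
    · exact hnone z hz hb₀adj.symm
  · exact side_step hx₀C hzadj.symm hzS

/-- A moplex of the auxiliary graph contained in the `x`-side is a moplex of `G`. -/
lemma transfer (hS : IsMinSeparator G x y S) (X : Set V)
    (hXC : X ⊆ sideSet G S x)
    (hX : IsMoplex (auxH G (sideSet G S x ∪ S) S) X) : IsMoplex G X := by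
  obtain ⟨hXne, ⟨hXclq, hXmod⟩, hXmax, hXnbhd⟩ := hX
  obtain ⟨x₀, hx₀⟩ := hXne
  have hHG : ∀ {c : V}, c ∈ sideSet G S x →
      ∀ v, ((auxH G (sideSet G S x ∪ S) S).Adj c v ↔ G.Adj c v) :=
    fun hc v => auxH_adj_side hc v
  have hGclq : G.IsClique X := fun a ha b hb hab => (hHG (hXC ha) b).mp (hXclq ha hb hab)
  have hGmod : IsModule G X := by
    intro v hv
    rcases hXmod v hv with hall | hnone
    · exact Or.inl fun c hc => ((hHG (hXC hc) v).mp (hall c hc).symm).symm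
    · exact Or.inr fun c hc hadj => hnone c hc ((hHG (hXC hc) v).mpr hadj.symm).symm
  have hBy : ∀ {s : V}, s ∈ S → ∃ b, G.Adj s b ∧ ReachOutside G S b y :=
    fun hs => minsep_nbr_side (minsep_symm hS) hs
  have hYsub : ∀ Y, X ⊆ Y → G.IsClique Y → IsModule G Y → Y ⊆ sideSet G S x :=
    fun Y hXY hYclq hYmod => clique_module_subset_side hS (hXC hx₀) Y (hXY hx₀) hYclq hYmod
  have hGmax : ∀ Y, X ⊆ Y → IsCliqueModule G Y → Y = X := by
    rintro Y hXY ⟨hYclq, hYmod⟩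
    have hYC := hYsub Y hXY hYclq hYmod
    apply hXmax Y hXY
    constructor
    · intro a ha b hb hab
      exact (hHG (hYC ha) b).mpr (hYclq ha hb hab)
    · intro v hv
      rcases hYmod v hv with hall | hnone
      · exact Or.inl fun c hc => ((hHG (hYC hc) v).mpr (hall c hc).symm).symm
      · exact Or.inr fun c hc hadj => hnone c hc ((hHG (hYC hc) v).mp hadj.symm).symm
  have hnbeq : setNbhd (auxH G (sideSet G S x ∪ S) S) X = setNbhd G X := by
    ext v
    simp only [setNbhd, Set.mem_setOf_eq]
    constructor
    · rintro ⟨hv, c, hc, hadj⟩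
      exact ⟨hv, c, hc, ((hHG (hXC hc) v).mp hadj.symm).symm⟩
    · rintro ⟨hv, c, hc, hadj⟩
      exact ⟨hv, c, hc, ((hHG (hXC hc) v).mpr hadj.symm).symm⟩
  refine ⟨⟨x₀, hx₀⟩, ⟨hGclq, hGmod⟩, hGmax, ?_⟩
  rcases hXnbhd with he | hmin
  · exact Or.inl (hnbeq ▸ he)
  rw [hnbeq] at hmin
  obtain ⟨p, q, hpq, hT⟩ := hmin
  have hTall : ∀ {t : V}, t ∈ setNbhd G X → ∀ c ∈ X, G.Adj t c := by
    intro t ht c hc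
    obtain ⟨htX, c', hc', hadj⟩ := ht
    rcases hGmod t htX with hall | hnone
    · exact hall c hc
    · exact absurd hadj (hnone c' hc')
  have hTK : ∀ {t : V}, t ∈ setNbhd G X → t ∈ sideSet G S x ∪ S := by
    intro t ht
    exact side_nbr_K (hXC hx₀) (hTall ht x₀ hx₀).symm
  have hcomp : ∀ v, ReachOutside G (setNbhd G X) x₀ v → v ∈ X := by
    have aux : ∀ {a b : V} (pw : G.Walk a b),
        (∀ z ∈ pw.support, z ∉ setNbhd G X) → a ∈ X → b ∈ X := by
      intro a b pw
      induction pw with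
      | nil => intro _ ha; exact ha
      | @cons a d b hadj qw ih =>
        intro hp ha
        have hd : d ∈ X := by
          by_contra hd
          exact hp d (by simp [Walk.support_cons, qw.start_mem_support]) ⟨hd, a, ha, hadj.symm⟩
        exact ih (fun z hz => hp z (by simp [Walk.support_cons, hz])) hd
    rintro v ⟨pw, hpw⟩
    exact aux pw hpw hx₀
  have hnotboth : ¬(p ∈ X ∧ q ∈ X) := by
    rintro ⟨hp', hq'⟩
    exact hT.1.1 (hXclq hp' hq' hpq)
  have main2 : ∀ r z, IsMinSeparator (auxH G (sideSet G S x ∪ S) S) r z (setNbhd G X) →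
      z ∉ X → IsMinimalSeparator G (setNbhd G X) := by
    intro r z hrz hzX
    have hzT : z ∉ setNbhd G X := hrz.1.2.2.1
    have hx₀T : x₀ ∉ setNbhd G X := fun hc => hc.1 hx₀
    have hx₀z : ¬ G.Adj x₀ z := fun hadj => hzT ⟨hzX, x₀, hx₀, hadj.symm⟩
    refine ⟨x₀, z, fun e => hzX (e ▸ hx₀), ⟨⟨hx₀z, hx₀T, hzT, ?_⟩, ?_⟩⟩
    · intro hr; exact hzX (hcomp z hr)
    · intro T' hT'sub hT'sep
      obtain ⟨t, htT, htT'⟩ := Set.exists_of_ssubset hT'sub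
      obtain ⟨d, hdadj, hdz⟩ := minsep_nbr_side (minsep_symm hrz) htT
      obtain ⟨pw, hpw⟩ := hdz
      have hT'C₂ : ∀ z', ReachOutside G S z' y → z' ∉ T' := by
        intro z' hz' hmem
        rcases hTK (hT'sub.subset hmem) with hc | hcS
        · exact sides_disj hS hc hz'
        · exact reach_left_not hz' hcS
      have hsupp : ∀ z' ∈ (Walk.cons hdadj pw).support, z' ∉ T' := by
        intro z' hz'
        rcases (by simpa [Walk.support_cons] using hz' : z' = t ∨ z' ∈ pw.support) with rfl | hz'
        · exact htT'
        · exact fun hmem => hpw z' hz' (hT'sub.subset hmem)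
      have htz : ReachOutside G T' t z := conv_reach hS hT'C₂ (Walk.cons hdadj pw) hsupp
      have hx₀T' : x₀ ∉ T' := fun hm => hx₀T (hT'sub.subset hm)
      have : ReachOutside G T' x₀ z :=
        reach_trans (reach_adj (hTall htT x₀ hx₀).symm hx₀T' htT') htz
      exact hT'sep.2.2.2 this
  by_cases hqX : q ∈ X
  · exact Or.inr (main2 q p (minsep_symm hT) (fun hp' => hnotboth ⟨hp', hqX⟩))
  · exact Or.inr (main2 p q hT hqX)

/-- Berry–Bordat: the `x`-side of a minimal `x,y`-separator contains a moplex. -/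
lemma bb_moplex :
    ∀ (n : ℕ) (G : SimpleGraph V) (x y : V) (S : Set V),
      IsMinSeparator G x y S → x ≠ y → (sideSet G S x).ncard ≤ n →
      ∃ X, IsMoplex G X ∧ X ⊆ sideSet G S x := by
  intro n
  induction n using Nat.strong_induction_on with
  | _ n ih =>
  intro G x y S hS hxy hn
  by_cases hcc : ∀ a ∈ sideSet G S x ∪ S, ∀ b ∈ sideSet G S x ∪ S, a ≠ b →
      (auxH G (sideSet G S x ∪ S) S).Adj a b
  -- Base case: the whole side is a clique module, hence a moplex.
  · have hxC : x ∈ sideSet G S x := reach_refl hS.1.2.1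
    have hCS : ∀ c ∈ sideSet G S x, c ∉ S := fun c hc => reach_left_not hc
    have hclq : G.IsClique (sideSet G S x) := by
      intro c₁ hc₁ c₂ hc₂ hne'
      exact (auxH_adj_side hc₁ c₂).mp (hcc c₁ (Or.inl hc₁) c₂ (Or.inl hc₂) hne')
    have hmod : IsModule G (sideSet G S x) := by
      intro v hv
      by_cases hvS : v ∈ S
      · left
        intro c hc
        have hne' : v ≠ c := fun e => hCS c hc (e ▸ hvS)
        exact ((auxH_adj_side hc v).mp (hcc v (Or.inr hvS) c (Or.inl hc) hne').symm).symm
      · right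
        intro c hc hadj
        rcases side_nbr_K hc hadj.symm with h | h
        · exact hv h
        · exact hvS h
    have hmax : ∀ Y, sideSet G S x ⊆ Y → IsCliqueModule G Y → Y = sideSet G S x := by
      rintro Y hXY ⟨hYclq, hYmod⟩
      exact Set.Subset.antisymm
        (clique_module_subset_side hS hxC Y (hXY hxC) hYclq hYmod) hXY
    have hnbS : setNbhd G (sideSet G S x) = S := by
      ext t
      constructor
      · rintro ⟨htC, c, hc, hadj⟩
        rcases side_nbr_K hc hadj.symm with h | h
        · exact absurd h htC
        · exact h
      · intro htS
        obtain ⟨a, haadj, hax⟩ := minsep_nbr_side hS htS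
        exact ⟨fun hc => hCS t hc htS, a, hax, haadj⟩
    refine ⟨sideSet G S x, ⟨⟨x, hxC⟩, ⟨hclq, hmod⟩, hmax, Or.inr ?_⟩, subset_rfl⟩
    rw [hnbS]
    exact ⟨x, y, hxy, hS⟩
  -- Inductive case: find a smaller side inside the auxiliary graph.
  · push_neg at hcc
    obtain ⟨a, haK, b, hbK, hab, hnadj⟩ := hcc
    obtain ⟨S', hS'⟩ := exists_minsep (G := auxH G (sideSet G S x ∪ S) S) hab hnadj
    have main : ∀ a' b', a' ∈ sideSet G S x ∪ S → b' ∈ sideSet G S x ∪ S → a' ≠ b' →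
        IsMinSeparator (auxH G (sideSet G S x ∪ S) S) a' b' S' →
        (∀ s ∈ S, s ∉ sideSet (auxH G (sideSet G S x ∪ S) S) S' a') →
        ∃ X, IsMoplex G X ∧ X ⊆ sideSet G S x := by
      intro a' b' haK' hbK' hab' hS'' hCa
      have haS' : a' ∉ S' := hS''.1.2.1
      have haS : a' ∉ S := fun hmem => hCa a' hmem (reach_refl haS')
      have haC : a' ∈ sideSet G S x := by
        rcases haK' with h | h
        · exact h
        · exact absurd h haS
      have hsub : ∀ v, v ∈ sideSet (auxH G (sideSet G S x ∪ S) S) S' a' →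
          v ∈ sideSet G S x := by
        have aux : ∀ {c v : V} (p : (auxH G (sideSet G S x ∪ S) S).Walk c v),
            (∀ z ∈ p.support, z ∉ S') → c ∈ sideSet G S x →
            ReachOutside (auxH G (sideSet G S x ∪ S) S) S' c a' →
            v ∈ sideSet G S x := by
          intro c v p
          induction p with
          | nil => intro _ hc _; exact hc
          | @cons c d v hadj q ihp =>
            intro hp hc hca
            have hdS' : d ∉ S' := hp d (by simp [Walk.support_cons, q.start_mem_support])
            have hcS' : c ∉ S' := reach_left_not hca
            have hda : ReachOutside (auxH G (sideSet G S x ∪ S) S) S' d a' :=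
              reach_trans (reach_adj hadj.symm hdS' hcS') hca
            have hdS : d ∉ S := fun hdmem => hCa d hdmem hda
            have hdG : G.Adj c d := (auxH_adj_side hc d).mp hadj
            exact ihp (fun z hz => hp z (by simp [Walk.support_cons, hz]))
              (side_step hc hdG hdS) hda
        intro v hv
        obtain ⟨p, hp⟩ := hv
        exact aux p.reverse
          (by intro z hz; exact hp z (by simpa [Walk.support_reverse] using hz))
          haC (reach_refl haS')
      have hwit : ∃ c₀, c₀ ∈ sideSet G S x ∧
          c₀ ∉ sideSet (auxH G (sideSet G S x ∪ S) S) S' a' := by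
        rcases hbK' with hbC | hbS
        · exact ⟨b', hbC, fun hr => hS''.1.2.2.2 (reach_symm hr)⟩
        · obtain ⟨a₀, ha₀adj, ha₀x⟩ := minsep_nbr_side hS hbS
          refine ⟨a₀, ha₀x, ?_⟩
          intro hr
          have hbS' : b' ∉ S' := hS''.1.2.2.1
          have hHadj : (auxH G (sideSet G S x ∪ S) S).Adj a₀ b' :=
            (auxH_adj_side ha₀x b').mpr ha₀adj.symm
          exact hCa b' hbS
            (reach_trans (reach_adj hHadj.symm hbS' (reach_left_not hr)) hr)
      obtain ⟨c₀, hc₀C, hc₀A⟩ := hwit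
      have hsubset : sideSet (auxH G (sideSet G S x ∪ S) S) S' a' ⊆ sideSet G S x :=
        fun v hv => hsub v hv
      have hne' : sideSet (auxH G (sideSet G S x ∪ S) S) S' a' ≠ sideSet G S x :=
        fun e => hc₀A (e.symm ▸ hc₀C)
      have hcard : (sideSet (auxH G (sideSet G S x ∪ S) S) S' a').ncard <
          (sideSet G S x).ncard :=
        Set.ncard_lt_ncard (hsubset.ssubset_of_ne hne') (Set.toFinite _)
      obtain ⟨X, hXmop, hXsub⟩ :=
        ih (sideSet (auxH G (sideSet G S x ∪ S) S) S' a').ncard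
          (lt_of_lt_of_le hcard hn) (auxH G (sideSet G S x ∪ S) S) a' b' S' hS'' hab' le_rfl
      exact ⟨X, transfer hS X (fun v hv => hsub v (hXsub hv)) hXmop,
        fun v hv => hsub v (hXsub hv)⟩
    have hdisj : (∀ s ∈ S, s ∉ sideSet (auxH G (sideSet G S x ∪ S) S) S' a) ∨
        (∀ s ∈ S, s ∉ sideSet (auxH G (sideSet G S x ∪ S) S) S' b) := by
      by_contra hcon
      push_neg at hcon
      obtain ⟨⟨s₁, hs₁S, hs₁⟩, ⟨s₂, hs₂S, hs₂⟩⟩ := hcon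
      have : ReachOutside (auxH G (sideSet G S x ∪ S) S) S' a b := by
        by_cases he : s₁ = s₂
        · exact reach_trans (reach_symm hs₁) (he ▸ hs₂)
        · have hadj' : (auxH G (sideSet G S x ∪ S) S).Adj s₁ s₂ := Or.inr ⟨hs₁S, hs₂S, he⟩
          exact reach_trans (reach_symm hs₁)
            (reach_trans (reach_adj hadj' (reach_left_not hs₁) (reach_left_not hs₂)) hs₂)
      exact hS'.1.2.2.2 this
    rcases hdisj with hd | hd
    · exact main a b haK hbK hab hS' hd
    · exact main b a hbK haK hab.symm (minsep_symm hS') hd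

end bb


section final
variable [Fintype V] {G : SimpleGraph V} {U W : Set V} {x y : V}

/-- For every minimal `x,y`-separator, `U` is entirely on the `x`-side (and `W` on the
`y`-side), or vice versa. -/
lemma sides (h : HasExactlyTwoMoplexes G U W) {S : Set V}
    (hS : IsMinSeparator G x y S) (hxy : x ≠ y) :
    ((∀ u ∈ U, ReachOutside G S u x) ∧ (∀ w ∈ W, ReachOutside G S w y)) ∨
    ((∀ u ∈ U, ReachOutside G S u y) ∧ (∀ w ∈ W, ReachOutside G S w x)) := by
  obtain ⟨X₁, hX₁mop, hX₁sub⟩ := bb_moplex (sideSet G S x).ncard G x y S hS hxy le_rfl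
  obtain ⟨X₂, hX₂mop, hX₂sub⟩ :=
    bb_moplex (sideSet G S y).ncard G y x S (minsep_symm hS) hxy.symm le_rfl
  have hne12 : X₁ ≠ X₂ := by
    intro e
    obtain ⟨v, hv⟩ := hX₁mop.1
    exact sides_disj hS (hX₁sub hv) (hX₂sub (e ▸ hv))
  rcases h.2.2.2 X₁ hX₁mop with h₁ | h₁ <;> rcases h.2.2.2 X₂ hX₂mop with h₂ | h₂
  · exact absurd (h₁.trans h₂.symm) hne12
  · exact Or.inl ⟨fun u hu => hX₁sub (h₁ ▸ hu), fun w hw => hX₂sub (h₂ ▸ hw)⟩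
  · exact Or.inr ⟨fun u hu => hX₂sub (h₂ ▸ hu), fun w hw => hX₁sub (h₁ ▸ hw)⟩
  · exact absurd (h₁.trans h₂.symm) hne12

theorem moplex_unique_separation' (G : SimpleGraph V)
    (hU : U.Nonempty) (hW : W.Nonempty)
    (h : HasExactlyTwoMoplexes G U W)
    (hne : x ≠ y) (hxy : ¬ G.Adj x y) :
    (∀ S, IsMinSeparator G x y S → ∀ u ∈ U, ReachOutside G S u x) ∨
    (∀ S, IsMinSeparator G x y S → ∀ u ∈ U, ReachOutside G S u y) := by
  by_contra hcon
  push_neg at hcon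
  obtain ⟨⟨Sa, hSa, ua, hua, hnax⟩, ⟨Sb, hSb, ub, hub, hnby⟩⟩ := hcon
  -- On `Sa`, `U` must be on the `y`-side; on `Sb`, on the `x`-side.
  have hUya : (∀ u ∈ U, ReachOutside G Sa u y) ∧ (∀ w ∈ W, ReachOutside G Sa w x) := by
    rcases sides h hSa hne with ⟨h1, _⟩ | h1
    · exact absurd (h1 ua hua) hnax
    · exact h1
  have hUxb : (∀ u ∈ U, ReachOutside G Sb u x) ∧ (∀ w ∈ W, ReachOutside G Sb w y) := by
    rcases sides h hSb hne with h1 | ⟨h1, _⟩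
    · exact h1
    · exact absurd (h1 ub hub) hnby
  -- Uncross the two separators towards `x`.
  set S₁ := Sb with hS₁def
  set S₂ := Sa with hS₂def
  have hS₁ : IsMinSeparator G x y S₁ := hSb
  have hS₂ : IsMinSeparator G x y S₂ := hSa
  set S₃ := (S₁ ∩ S₂) ∪ ((S₁ ∩ sideSet G S₂ x) ∪ (S₂ ∩ sideSet G S₁ x)) with hS₃def
  have hS₃sub : ∀ z ∈ S₃, z ∈ S₁ ∨ z ∈ S₂ := by
    rintro z (⟨h1, _⟩ | (⟨h1, _⟩ | ⟨h1, _⟩))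
    · exact Or.inl h1
    · exact Or.inl h1
    · exact Or.inr h1
  have hsep₃ : IsSeparator G x y S₃ := by
    refine ⟨hxy, ?_, ?_, ?_⟩
    · intro hmem
      rcases hS₃sub x hmem with h' | h'
      · exact hS₁.1.2.1 h'
      · exact hS₂.1.2.1 h'
    · intro hmem
      rcases hS₃sub y hmem with h' | h'
      · exact hS₁.1.2.2.1 h'
      · exact hS₂.1.2.2.1 h'
    · rintro ⟨p, hp⟩
      have aux : ∀ {c v : V} (q : G.Walk c v), (∀ z ∈ q.support, z ∉ S₃) →
          c ∈ sideSet G S₁ x → c ∈ sideSet G S₂ x →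
          v ∈ sideSet G S₁ x ∧ v ∈ sideSet G S₂ x := by
        intro c v q
        induction q with
        | nil => intro _ hc1 hc2; exact ⟨hc1, hc2⟩
        | @cons c d v hadj q ihq =>
          intro hq hc1 hc2
          have hd3 : d ∉ S₃ := hq d (by simp [Walk.support_cons, q.start_mem_support])
          have hdS₁ : d ∉ S₁ := by
            intro hd1
            by_cases hd2 : d ∈ S₂
            · exact hd3 (Or.inl ⟨hd1, hd2⟩)
            · exact hd3 (Or.inr (Or.inl ⟨hd1, side_step hc2 hadj hd2⟩))
          have hdS₂ : d ∉ S₂ := by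
            intro hd2
            exact hd3 (Or.inr (Or.inr ⟨hd2, side_step hc1 hadj hdS₁⟩))
          exact ihq (fun z hz => hq z (by simp [Walk.support_cons, hz]))
            (side_step hc1 hadj hdS₁) (side_step hc2 hadj hdS₂)
      have := aux p hp (reach_refl hS₁.1.2.1) (reach_refl hS₂.1.2.1)
      exact hS₁.1.2.2.2 (reach_symm this.1)
  obtain ⟨S₅, hS₅sub, hS₅⟩ := exists_minsep_of_sep hsep₃
  obtain ⟨u, hu⟩ := hU
  obtain ⟨w, hw⟩ := hW
  -- `u` and `w` both reach `y` outside `S₅`.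
  have hu5y : ReachOutside G S₅ u y := by
    refine reach_avoid (fun z hz hmem => ?_) (hUya.1 u hu)
    rcases hS₅sub hmem with ⟨_, h2⟩ | (⟨_, h2⟩ | ⟨h1, _⟩)
    · exact reach_left_not hz h2
    · exact sides_disj hS₂ h2 hz
    · exact reach_left_not hz h1
  have hw5y : ReachOutside G S₅ w y := by
    refine reach_avoid (fun z hz hmem => ?_) (hUxb.2 w hw)
    rcases hS₅sub hmem with ⟨h1, _⟩ | (⟨h1, _⟩ | ⟨_, h2⟩)
    · exact reach_left_not hz h1
    · exact reach_left_not hz h1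
    · exact sides_disj hS₁ h2 hz
  obtain ⟨X, hXmop, hXsub⟩ := bb_moplex (sideSet G S₅ x).ncard G x y S₅ hS₅ hne le_rfl
  rcases h.2.2.2 X hXmop with rfl | rfl
  · exact hS₅.1.2.2.2 (reach_trans (reach_symm (hXsub hu)) hu5y)
  · exact hS₅.1.2.2.2 (reach_trans (reach_symm (hXsub hw)) hw5y)

end final

/-- In a non-complete graph with exactly two moplexes, for non-adjacent `x`, `y`, the
moplex `U` lies on the side of `x` for every minimal `x,y`-separator, or on the side
of `y` for every minimal `x,y`-separator. -/
theorem moplex_unique_separation {V : Type*} [Fintype V] (G : SimpleGraph V)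
    (U W : Set V) (hnc : NonComplete G) (h : HasExactlyTwoMoplexes G U W)
    (x y : V) (hne : x ≠ y) (hxy : ¬ G.Adj x y) :
    (∀ S, IsMinSeparator G x y S → ∀ u ∈ U, ReachOutside G S u x) ∨
    (∀ S, IsMinSeparator G x y S → ∀ u ∈ U, ReachOutside G S u y) :=
  moplex_unique_separation' G h.1.1 h.2.1.1 h hne hxy

end MoplexPaper
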